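/- (Contraction Theorem) For every ζ ∈ (0, ζ₀) there exists ε > 0 such that for every u ∈ ℂ with 1 < |u| < 1/ζ + ε and every s ∈ ℂ with s² = u, one has |g(s)| < |u|. -/

import Mathlib

set_option maxHeartbeats 1000000


/-- `g ζ w = (ζ − w)/(ζw − 1)`. -/
noncomputable def gmap (ζ : ℝ) (w : ℂ) : ℂ := ((ζ : ℂ) - w) / ((ζ : ℂ) * w - 1)

/-- (Contraction Theorem.) Let `s₀ ∈ (0,1)` be the real root of `s³ + s² + s − 1 = 0` and
`ζ₀ = s₀²`. For every `ζ ∈ (0, ζ₀)` there is `ε > 0` such that every `u` with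
`1 < |u| < 1/ζ + ε` satisfies `|g(s)| < |u|` for both square roots `s` of `u`. -/
theorem stmt12 (s₀ : ℝ) (hs₀0 : 0 < s₀) (hs₀1 : s₀ < 1)
    (hs₀ : s₀ ^ 3 + s₀ ^ 2 + s₀ - 1 = 0)
    (ζ : ℝ) (hζ0 : 0 < ζ) (hζ : ζ < s₀ ^ 2) :
    ∃ ε : ℝ, 0 < ε ∧ ∀ u : ℂ, 1 < ‖u‖ → ‖u‖ < 1 / ζ + ε →
      ∀ s : ℂ, s ^ 2 = u → ‖gmap ζ s‖ < ‖u‖ := by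
  have h1 : s₀ * (1 + s₀ ^ 2) = 1 - s₀ ^ 2 := by nlinarith [hs₀]
  have hD0 : 0 < 1 - 3*ζ - ζ^2 - ζ^3 := by
    nlinarith [h1, hζ, hζ0, sq_nonneg (s₀^2 - ζ), sq_nonneg (1 - s₀^2), hs₀0, hs₀1,
      mul_pos hs₀0 hs₀0, sq_nonneg (s₀^2 + ζ)]
  have hζ3 : 3*ζ < 1 := by nlinarith [hD0, hζ0, sq_nonneg ζ, pow_pos hζ0 3]
  have hDle : 1 - 3*ζ - ζ^2 - ζ^3 ≤ 1 := by nlinarith [hζ0, sq_nonneg ζ, pow_pos hζ0 3]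
  refine ⟨(1 - 3*ζ - ζ^2 - ζ^3)/8, by linarith, ?_⟩
  intro u hu1 hu2 s hs
  set x := s.re with hxdef
  set y := s.im with hydef
  have hA : ‖u‖ = x^2 + y^2 := by
    rw [← hs, norm_pow, Complex.sq_norm, Complex.normSq_apply]; ring
  rw [hA] at hu1 hu2
  have hAζ : ζ * (x^2 + y^2) < 1 + ζ * ((1 - 3*ζ - ζ^2 - ζ^3)/8) := by
    have h := mul_lt_mul_of_pos_left hu2 hζ0
    have hinv : ζ * (1/ζ) = 1 := mul_one_div_cancel hζ0.ne'
    calc ζ * (x^2+y^2) < ζ * (1/ζ + (1 - 3*ζ - ζ^2 - ζ^3)/8) := h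
      _ = 1 + ζ * ((1 - 3*ζ - ζ^2 - ζ^3)/8) := by rw [mul_add, hinv]
  -- denominator nonzero
  have hden : ((ζ:ℂ) * s - 1) ≠ 0 := by
    intro h
    have h1' : (ζ:ℂ) * s = 1 := by rwa [sub_eq_zero] at h
    have h2 : ζ * ‖s‖ = 1 := by
      have := congrArg norm h1'
      rwa [norm_mul, Complex.norm_real, Real.norm_eq_abs, abs_of_pos hζ0, norm_one] at this
    have h3 : (‖s‖)^2 = x^2 + y^2 := by
      rw [Complex.sq_norm, Complex.normSq_apply]; ring
    have h4 : ζ^2 * (x^2+y^2) = 1 := by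
      rw [← h3]; linear_combination (ζ * ‖s‖ + 1) * h2
    nlinarith [mul_lt_mul_of_pos_left hAζ hζ0, h4, hζ3, hDle, hζ0, hD0,
      mul_pos hζ0 hζ0]
  have hpos : 0 < ‖(ζ:ℂ) * s - 1‖ := norm_pos_iff.mpr hden
  -- sqrt setup
  have hS0 : (0:ℝ) ≤ x^2 + y^2 := by positivity
  set t := Real.sqrt (x^2+y^2) with htdef
  have ht2 : t^2 = x^2 + y^2 := Real.sq_sqrt hS0
  have ht0 : 0 ≤ t := Real.sqrt_nonneg _
  have ht1 : 1 < t := by nlinarith [ht2, hu1, ht0]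
  have hxt : x ≤ t := by
    have h5 : |x| ≤ t := by
      rw [htdef]
      have := Real.sqrt_le_sqrt (show x^2 ≤ x^2 + y^2 by nlinarith [sq_nonneg y])
      simpa [Real.sqrt_sq_eq_abs] using this
    linarith [le_abs_self x]
  have hζt : ζ * t^2 < 1 + ζ * ((1 - 3*ζ - ζ^2 - ζ^3)/8) := by rw [ht2]; exact hAζ
  -- core quadratic positivity certificate
  have hW : 0 < 1 + ζ*(1-4*ζ-ζ^2)/8 - ζ^3*(1-3*ζ-ζ^2-ζ^3)/64 := by
    nlinarith [hζ0, hζ3, hDle, hD0, sq_nonneg ζ, mul_pos hζ0 hζ0,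
      mul_pos (mul_pos hζ0 hζ0) hζ0]
  have hE : 0 < (1-ζ)^2*(1 + ζ*((1-3*ζ-ζ^2-ζ^3)/8))
      - ζ*((1 + ζ*((1-3*ζ-ζ^2-ζ^3)/8)) + ζ)^2 := by
    have hEfac : (1-ζ)^2*(1 + ζ*((1-3*ζ-ζ^2-ζ^3)/8))
        - ζ*((1 + ζ*((1-3*ζ-ζ^2-ζ^3)/8)) + ζ)^2
        = (1 - 3*ζ - ζ^2 - ζ^3) * (1 + ζ*(1-4*ζ-ζ^2)/8 - ζ^3*(1-3*ζ-ζ^2-ζ^3)/64) := by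
      ring
    rw [hEfac]; exact mul_pos hD0 hW
  have hMt : 0 < (1 + ζ*((1-3*ζ-ζ^2-ζ^3)/8)) - ζ*t^2 := by linarith
  have hta : 0 < ζ*t^2 - ζ := by nlinarith [ht1, hζ0]
  have hMζ : 0 < (1 + ζ*((1-3*ζ-ζ^2-ζ^3)/8)) - ζ := by
    have := mul_pos hζ0 hD0
    nlinarith [hζ3, hζ0]
  have hG1 : 0 < (1-3*ζ)*(1+ζ) := mul_pos (by linarith) (by linarith)
  have hq1 : 0 < ζ^2 * ((1-3*ζ)*(1+ζ)) * ((1 + ζ*((1-3*ζ-ζ^2-ζ^3)/8)) - ζ*t^2) :=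
    mul_pos (mul_pos (pow_pos hζ0 2) hG1) hMt
  have hq2 : 0 < ζ * ((1-ζ)^2*(1 + ζ*((1-3*ζ-ζ^2-ζ^3)/8))
      - ζ*((1 + ζ*((1-3*ζ-ζ^2-ζ^3)/8)) + ζ)^2) * (ζ*t^2 - ζ) :=
    mul_pos (mul_pos hζ0 hE) hta
  have hq3 : 0 < ζ^2 * (ζ*t^2 - ζ) * (((1 + ζ*((1-3*ζ-ζ^2-ζ^3)/8)) - ζ*t^2)
      * ((1 + ζ*((1-3*ζ-ζ^2-ζ^3)/8)) - ζ)) :=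
    mul_pos (mul_pos (pow_pos hζ0 2) hta) (mul_pos hMt hMζ)
  have hid : (ζ^2 * ((1 + ζ*((1-3*ζ-ζ^2-ζ^3)/8)) - ζ)) * ((1-ζ)^2*t^2 - ζ^2*(t^2+1)^2)
      = ζ^2 * ((1-3*ζ)*(1+ζ)) * ((1 + ζ*((1-3*ζ-ζ^2-ζ^3)/8)) - ζ*t^2)
      + ζ * ((1-ζ)^2*(1 + ζ*((1-3*ζ-ζ^2-ζ^3)/8))
          - ζ*((1 + ζ*((1-3*ζ-ζ^2-ζ^3)/8)) + ζ)^2) * (ζ*t^2 - ζ)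
      + ζ^2 * (ζ*t^2 - ζ) * (((1 + ζ*((1-3*ζ-ζ^2-ζ^3)/8)) - ζ*t^2)
          * ((1 + ζ*((1-3*ζ-ζ^2-ζ^3)/8)) - ζ)) := by ring
  have hGpos : 0 < (ζ^2 * ((1 + ζ*((1-3*ζ-ζ^2-ζ^3)/8)) - ζ))
      * ((1-ζ)^2*t^2 - ζ^2*(t^2+1)^2) := by
    rw [hid]; linarith
  have hc : 0 < ζ^2 * ((1 + ζ*((1-3*ζ-ζ^2-ζ^3)/8)) - ζ) :=
    mul_pos (pow_pos hζ0 2) hMζ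
  have hG : 0 < (1-ζ)^2*t^2 - ζ^2*(t^2+1)^2 := by
    by_contra hcon
    push_neg at hcon
    have := mul_nonpos_of_nonneg_of_nonpos hc.le hcon
    linarith
  have hsq : ζ^2 * (t^2+1)^2 < (1-ζ)^2 * t^2 := by linarith
  clear hid hGpos hq1 hq2 hq3 hE hW hMt hMζ hc hG hG1
  have hkey : ζ * (t^2+1) < (1-ζ) * t := by
    nlinarith [hsq, mul_pos hζ0 (show (0:ℝ) < t^2 + 1 by positivity),
      mul_pos (show (0:ℝ) < 1 - ζ by linarith) (lt_trans one_pos ht1)]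
  have hf2 : ζ*t^2 + ζ - (1-ζ)*t < 0 := by linarith
  have hf1 : ζ*t^2 + ζ - (1+ζ)*t < 0 := by
    nlinarith [mul_pos hζ0 (lt_trans one_pos ht1)]
  have hP : 0 < (ζ*t^2 + ζ - (1+ζ)*t) * (ζ*t^2 + ζ - (1-ζ)*t) :=
    mul_pos_of_neg_of_neg hf1 hf2
  have hBfac : ζ^2*((t^2)^2 + t^2 + 1) - 2*ζ*x*(t^2+1) + t^2
      - (ζ*t^2 + ζ - (1+ζ)*t) * (ζ*t^2 + ζ - (1-ζ)*t)
      = 2*ζ*(t - x)*(t^2+1) := by ring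
  have hB : 0 < ζ^2*((t^2)^2 + t^2 + 1) - 2*ζ*x*(t^2+1) + t^2 := by
    have hnn : 0 ≤ 2*ζ*(t - x)*(t^2+1) := by
      have : (0:ℝ) ≤ t - x := by linarith
      positivity
    linarith
  rw [ht2] at hB
  have hApos : 0 < x^2 + y^2 - 1 := by linarith
  have hfac : (x^2+y^2)^2*((ζ*x - 1)^2 + (ζ*y)^2) - ((ζ - x)^2 + y^2)
      = (x^2+y^2-1) * (ζ^2*((x^2+y^2)^2 + (x^2+y^2) + 1)
        - 2*ζ*x*((x^2+y^2)+1) + (x^2+y^2)) := by ring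
  have hcore : (ζ - x)^2 + y^2 < (x^2+y^2)^2 * ((ζ*x - 1)^2 + (ζ*y)^2) := by
    have := mul_pos hApos hB
    linarith [hfac, this]
  have habs1 : (‖(ζ:ℂ) - s‖) ^ 2 = (ζ - x)^2 + y^2 := by
    rw [Complex.sq_norm, Complex.normSq_apply, Complex.sub_re, Complex.sub_im,
        Complex.ofReal_re, Complex.ofReal_im]
    ring
  have habs2 : (‖(ζ:ℂ)*s - 1‖) ^ 2 = (ζ*x - 1)^2 + (ζ*y)^2 := by
    rw [Complex.sq_norm, Complex.normSq_apply, Complex.sub_re, Complex.sub_im,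
        Complex.mul_re, Complex.mul_im, Complex.ofReal_re, Complex.ofReal_im,
        Complex.one_re, Complex.one_im]
    ring
  have key2 : ‖(ζ:ℂ) - s‖ ^ 2
      < ((x^2+y^2) * ‖(ζ:ℂ)*s - 1‖) ^ 2 := by
    rw [habs1, mul_pow, habs2]; exact hcore
  have key : ‖(ζ:ℂ) - s‖ < (x^2+y^2) * ‖(ζ:ℂ)*s - 1‖ :=
    lt_of_pow_lt_pow_left₀ 2 (by positivity) key2
  have hg : ‖gmap ζ s‖
      = ‖(ζ:ℂ) - s‖ / ‖(ζ:ℂ)*s - 1‖ := by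
    rw [gmap, norm_div]
  rw [hg, hA, div_lt_iff₀ hpos]
  exact key
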